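/- Let H be a real inner product space, F : H → ℝ convex and Fréchet differentiable with gradient ∇F satisfying F(x) - F(y) ≥ ⟨∇F(y), x - y⟩ for all x, y ∈ H. Let z₁,…,zₙ ∈ H, q₁,…,qₙ ≥ 0 with Qₙ = Σᵢ qᵢ > 0. Then 0 ≤ (1/Qₙ)Σᵢ qᵢ F(zᵢ) - F((1/Qₙ)Σᵢ qᵢzᵢ) ≤ (1/Qₙ)Σᵢ qᵢ⟨∇F(zᵢ), zᵢ⟩ - ⟨(1/Qₙ)Σᵢ qᵢ∇F(zᵢ), (1/Qₙ)Σᵢ qᵢzᵢ⟩. -/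

import Mathlib

open scoped RealInnerProductSpace

theorem stmt16 {H : Type*} [NormedAddCommGroup H] [InnerProductSpace ℝ H]
    (F : H → ℝ) (G : H → H) (hconv : ConvexOn ℝ Set.univ F)
    (hgrad : ∀ x y : H, ⟪G y, x - y⟫ ≤ F x - F y)
    (n : ℕ) (z : Fin n → H) (q : Fin n → ℝ) (hq : ∀ i, 0 ≤ q i)
    (Q : ℝ) (hQ : Q = ∑ i, q i) (hQpos : 0 < Q) :
    0 ≤ (1 / Q) * ∑ i, q i * F (z i) - F ((1 / Q) • ∑ i, q i • z i) ∧
      (1 / Q) * ∑ i, q i * F (z i) - F ((1 / Q) • ∑ i, q i • z i) ≤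
        (1 / Q) * ∑ i, q i * ⟪G (z i), z i⟫ -
          ⟪(1 / Q) • ∑ i, q i • G (z i), (1 / Q) • ∑ i, q i • z i⟫ := by
  have hQ' : ∑ i, q i = Q := hQ.symm
  set zb : H := (1 / Q) • ∑ i, q i • z i with hzb
  have h1 : F zb ≤ (1 / Q) * ∑ i, q i * F (z i) := by
    have h := hconv.map_centerMass_le (t := Finset.univ) (w := q) (p := z)
      (fun i _ => hq i) (by rw [hQ']; exact hQpos) (fun i _ => Set.mem_univ _)
    simpa [Finset.centerMass, hQ', hzb, one_div, smul_eq_mul, Finset.mul_sum] using h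
  have hQne : Q ≠ 0 := ne_of_gt hQpos
  have hsum : ∑ i, q i * (F (z i) - F zb) ≤
      ∑ i, q i * (⟪G (z i), z i⟫ - ⟪G (z i), zb⟫) := by
    refine Finset.sum_le_sum fun i _ => mul_le_mul_of_nonneg_left ?_ (hq i)
    have h := hgrad zb (z i)
    rw [inner_sub_right] at h
    linarith
  have hC : ⟪(1 / Q) • ∑ i, q i • G (z i), zb⟫ = (1 / Q) * ∑ i, q i * ⟪G (z i), zb⟫ := by
    rw [real_inner_smul_left, sum_inner]
    simp [real_inner_smul_left]
  set A := ∑ i, q i * F (z i)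
  set B := ∑ i, q i * ⟪G (z i), z i⟫
  set C := ∑ i, q i * ⟪G (z i), zb⟫
  have hsum' : A - Q * F zb ≤ B - C := by
    have e1 : ∑ i, q i * (F (z i) - F zb) = A - Q * F zb := by
      simp only [mul_sub, Finset.sum_sub_distrib, ← Finset.sum_mul, hQ']
      rfl
    have e2 : ∑ i, q i * (⟪G (z i), z i⟫ - ⟪G (z i), zb⟫) = B - C := by
      simp only [mul_sub, Finset.sum_sub_distrib]
      rfl
    rw [e1, e2] at hsum
    exact hsum
  have hinv : (1 / Q) * Q = 1 := by field_simp
  constructor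
  · linarith
  · rw [hC]
    have h3 : (1 / Q) * (A - Q * F zb) ≤ (1 / Q) * (B - C) :=
      mul_le_mul_of_nonneg_left hsum' (by positivity)
    rw [mul_sub, mul_sub, ← mul_assoc, hinv, one_mul] at h3
    linarith
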